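/- With the automorphisms $s_i$ of $K = \mathbb{C}(\alpha_j, f_j, \tau_j)$ defined as above, one has the braid relation $(s_i s_{i+1})^3 = \mathrm{id}$ and the commutation relation $s_i s_j = s_j s_i$ for $|i - j| \ge 2$, so the $s_i$ generate a representation of the affine Weyl group of type $A_\infty$ by field automorphisms. -/

import Mathlib

set_option maxHeartbeats 2000000

lemma aut_ext' {K : Type*} [Field K] {S : Set K} (hgen : Subfield.closure S = ⊤)
    {φ ψ : RingAut K} (h : ∀ x ∈ S, φ x = ψ x) : φ = ψ := by
  have : (φ : K →+* K) = (ψ : K →+* K) :=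
    RingHom.eq_of_eqOn_of_field_closure_eq_top hgen h
  exact RingEquiv.ext fun x => RingHom.congr_fun this x

/-- The automorphisms `sᵢ` of `K = ℂ(α, f, τ)` (defined on generators by
`sᵢ(αᵢ) = -αᵢ`, `sᵢ(α_{i±1}) = α_{i±1} + αᵢ`, `sᵢ(f_{i±1}) = f_{i±1} ± αᵢ/fᵢ`,
`sᵢ(τᵢ) = fᵢτ_{i-1}τ_{i+1}/τᵢ`, other generators fixed) satisfy the braid relations
`(sᵢ s_{i+1})³ = 1` and the commutation relations `sᵢ sⱼ = sⱼ sᵢ` for `|i - j| ≥ 2`,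
hence give a representation of the affine Weyl group of type `A_∞` by field automorphisms.
Here `K` is any field generated by the `αᵢ, fᵢ, τᵢ` (`i ∈ ℤ`). -/
theorem stmt_12 {K : Type*} [Field K] (α f τ : ℤ → K)
    (hf : ∀ i, f i ≠ 0) (hτ : ∀ i, τ i ≠ 0)
    (hgen : Subfield.closure (Set.range α ∪ Set.range f ∪ Set.range τ) = ⊤)
    (s : ℤ → RingAut K)
    (hα1 : ∀ i, s i (α i) = -α i)
    (hα2 : ∀ i, s i (α (i + 1)) = α (i + 1) + α i)
    (hα3 : ∀ i, s i (α (i - 1)) = α (i - 1) + α i)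
    (hα4 : ∀ i j, j ≠ i → j ≠ i + 1 → j ≠ i - 1 → s i (α j) = α j)
    (hf1 : ∀ i, s i (f i) = f i)
    (hf2 : ∀ i, s i (f (i + 1)) = f (i + 1) + α i / f i)
    (hf3 : ∀ i, s i (f (i - 1)) = f (i - 1) - α i / f i)
    (hf4 : ∀ i j, j ≠ i → j ≠ i + 1 → j ≠ i - 1 → s i (f j) = f j)
    (hτ1 : ∀ i, s i (τ i) = f i * τ (i - 1) * τ (i + 1) / τ i)
    (hτ2 : ∀ i j, j ≠ i → s i (τ j) = τ j) :
    (∀ i, (s i * s (i + 1)) ^ 3 = 1) ∧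
    (∀ i j, 2 ≤ |i - j| → s i * s j = s j * s i) := by
  have mulapp : ∀ (g h : RingAut K) (x : K), (g * h) x = g (h x) := fun _ _ _ => rfl
  have mapne : ∀ (φ : RingAut K) (x : K), x ≠ 0 → φ x ≠ 0 := by
    intro φ x hx h
    exact hx (φ.injective (by rw [h, map_zero]))
  -- index-shifted versions
  have hα2' : ∀ i k : ℤ, k = i + 1 → s i (α k) = α k + α i := by
    rintro i k rfl; exact hα2 i
  have hα3' : ∀ i k : ℤ, k = i - 1 → s i (α k) = α k + α i := by
    rintro i k rfl; exact hα3 i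
  have hf2' : ∀ i k : ℤ, k = i + 1 → s i (f k) = f k + α i / f i := by
    rintro i k rfl; exact hf2 i
  have hf3' : ∀ i k : ℤ, k = i - 1 → s i (f k) = f k - α i / f i := by
    rintro i k rfl; exact hf3 i
  have hτ1' : ∀ i k l m : ℤ, k = i → l = i - 1 → m = i + 1 →
      s i (τ k) = f i * τ l * τ m / τ k := by
    rintro i k l m rfl rfl rfl; exact hτ1 _
  -- the involutivity
  have hsq : ∀ i, s i * s i = 1 := by
    intro i
    apply aut_ext' hgen
    rintro x (hx | ⟨k, rfl⟩)
    · rcases hx with ⟨k, rfl⟩ | ⟨k, rfl⟩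
      · -- α k
        show s i (s i (α k)) = α k
        rcases eq_or_ne k i with rfl | h1
        · rw [hα1, map_neg, hα1, neg_neg]
        rcases eq_or_ne k (i+1) with rfl | h2
        · rw [hα2, map_add, hα2, hα1]; ring
        rcases eq_or_ne k (i-1) with rfl | h3
        · rw [hα3, map_add, hα3, hα1]; ring
        · rw [hα4 i k h1 h2 h3, hα4 i k h1 h2 h3]
      · -- f k
        show s i (s i (f k)) = f k
        rcases eq_or_ne k i with rfl | h1
        · rw [hf1, hf1]
        rcases eq_or_ne k (i+1) with rfl | h2
        · rw [hf2, map_add, map_div₀, hf2, hα1, hf1]; ring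
        rcases eq_or_ne k (i-1) with rfl | h3
        · rw [hf3, map_sub, map_div₀, hf3, hα1, hf1]; ring
        · rw [hf4 i k h1 h2 h3, hf4 i k h1 h2 h3]
    · -- τ k
      show s i (s i (τ k)) = τ k
      rcases eq_or_ne k i with rfl | h1
      · rw [hτ1, map_div₀, map_mul, map_mul, hf1, hτ1,
          hτ2 k (k-1) (by omega), hτ2 k (k+1) (by omega)]
        field_simp [hf k, hτ (k-1), hτ (k+1), hτ k]
      · rw [hτ2 i k h1, hτ2 i k h1]
  -- braid key : s i * s (i+1) * s i = s (i+1) * s i * s (i+1)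
  have key : ∀ i, s i * s (i+1) * s i = s (i+1) * s i * s (i+1) := by
    intro i
    -- action facts
    have U1 : s i (α (i-1)) = α (i-1) + α i := hα3 i
    have U2 : s i (α i) = -α i := hα1 i
    have U3 : s i (α (i+1)) = α (i+1) + α i := hα2 i
    have U4 : s i (α (i+2)) = α (i+2) := hα4 i (i+2) (by omega) (by omega) (by omega)
    have UF1 : s i (f (i-1)) = (f (i-1) * f i - α i) / f i := by
      rw [hf3 i]; field_simp [hf i]; try ring
    have UF2 : s i (f i) = f i := hf1 i
    have UF3 : s i (f (i+1)) = (f (i+1) * f i + α i) / f i := by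
      rw [hf2 i]; field_simp [hf i]; try ring
    have UF4 : s i (f (i+2)) = f (i+2) := hf4 i (i+2) (by omega) (by omega) (by omega)
    have UT1 : s i (τ (i-1)) = τ (i-1) := hτ2 i (i-1) (by omega)
    have UT2 : s i (τ i) = f i * τ (i-1) * τ (i+1) / τ i := hτ1 i
    have UT3 : s i (τ (i+1)) = τ (i+1) := hτ2 i (i+1) (by omega)
    have UT4 : s i (τ (i+2)) = τ (i+2) := hτ2 i (i+2) (by omega)
    have V1 : s (i+1) (α (i-1)) = α (i-1) := hα4 (i+1) (i-1) (by omega) (by omega) (by omega)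
    have V2 : s (i+1) (α i) = α i + α (i+1) := hα3' (i+1) i (by omega)
    have V3 : s (i+1) (α (i+1)) = -α (i+1) := hα1 (i+1)
    have V4 : s (i+1) (α (i+2)) = α (i+2) + α (i+1) := hα2' (i+1) (i+2) (by omega)
    have VF1 : s (i+1) (f (i-1)) = f (i-1) := hf4 (i+1) (i-1) (by omega) (by omega) (by omega)
    have VF2 : s (i+1) (f i) = (f i * f (i+1) - α (i+1)) / f (i+1) := by
      rw [hf3' (i+1) i (by omega)]; field_simp [hf (i+1)]; try ring
    have VF3 : s (i+1) (f (i+1)) = f (i+1) := hf1 (i+1)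
    have VF4 : s (i+1) (f (i+2)) = (f (i+2) * f (i+1) + α (i+1)) / f (i+1) := by
      rw [hf2' (i+1) (i+2) (by omega)]; field_simp [hf (i+1)]; try ring
    have VT1 : s (i+1) (τ (i-1)) = τ (i-1) := hτ2 (i+1) (i-1) (by omega)
    have VT2 : s (i+1) (τ i) = τ i := hτ2 (i+1) i (by omega)
    have VT3 : s (i+1) (τ (i+1)) = f (i+1) * τ i * τ (i+2) / τ (i+1) :=
      hτ1' (i+1) (i+1) i (i+2) rfl (by omega) (by omega)
    have VT4 : s (i+1) (τ (i+2)) = τ (i+2) := hτ2 (i+1) (i+2) (by omega)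
    -- nonvanishing facts
    have hg2 := hf i
    have hg3 := hf (i+1)
    have ht1 := hτ (i-1)
    have ht2 := hτ i
    have ht3 := hτ (i+1)
    have ht4 := hτ (i+2)
    have hN1 : f (i+1) * f i + α i ≠ 0 := by
      have h0 := mapne (s i) _ hg3
      rw [UF3] at h0
      intro h; exact h0 (by rw [h, zero_div])
    have hN1' : f i * f (i+1) + α i ≠ 0 := by rw [mul_comm (f i)]; exact hN1
    have hN2 : f i * f (i+1) - α (i+1) ≠ 0 := by
      have h0 := mapne (s (i+1)) _ hg2
      rw [VF2] at h0
      intro h; exact h0 (by rw [h, zero_div])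
    have hN2' : f (i+1) * f i - α (i+1) ≠ 0 := by rw [mul_comm (f (i+1))]; exact hN2
    apply aut_ext' hgen
    rintro x (hx | ⟨k, rfl⟩)
    · rcases hx with ⟨k, rfl⟩ | ⟨k, rfl⟩
      · -- α k
        show s i (s (i+1) (s i (α k))) = s (i+1) (s i (s (i+1) (α k)))
        rcases eq_or_ne k (i-1) with rfl | h1
        · simp only [U1, U2, U3, U4, V1, V2, V3, V4, map_add, map_neg]; ring
        rcases eq_or_ne k i with rfl | h2
        · simp only [U1, U2, U3, U4, V1, V2, V3, V4, map_add, map_neg]; ring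
        rcases eq_or_ne k (i+1) with rfl | h3
        · simp only [U1, U2, U3, U4, V1, V2, V3, V4, map_add, map_neg]; ring
        rcases eq_or_ne k (i+2) with rfl | h4
        · simp only [U1, U2, U3, U4, V1, V2, V3, V4, map_add, map_neg]; ring
        · have e1 : s i (α k) = α k := hα4 i k h2 h3 h1
          have e2 : s (i+1) (α k) = α k := hα4 (i+1) k h3 (by omega) (by omega)
          simp only [e1, e2]
      · -- f k
        show s i (s (i+1) (s i (f k))) = s (i+1) (s i (s (i+1) (f k)))
        rcases eq_or_ne k (i-1) with rfl | h1
        · simp only [UF1, UF2, UF3, UF4, VF1, VF2, VF3, VF4, U1, U2, U3, U4, V1, V2, V3, V4,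
            map_add, map_sub, map_neg, map_mul, map_div₀, div_div_eq_mul_div, div_div, div_mul_eq_mul_div, ← mul_div_assoc]
          field_simp [hg2, hg3, hN1, hN1', hN2, hN2', ht1, ht2, ht3, ht4]
          ring
        rcases eq_or_ne k i with rfl | h2
        · simp only [UF1, UF2, UF3, UF4, VF1, VF2, VF3, VF4, U1, U2, U3, U4, V1, V2, V3, V4,
            map_add, map_sub, map_neg, map_mul, map_div₀, div_div_eq_mul_div, div_div, div_mul_eq_mul_div, ← mul_div_assoc]
          field_simp [hg2, hg3, hN1, hN1', hN2, hN2', ht1, ht2, ht3, ht4]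
          ring
        rcases eq_or_ne k (i+1) with rfl | h3
        · simp only [UF1, UF2, UF3, UF4, VF1, VF2, VF3, VF4, U1, U2, U3, U4, V1, V2, V3, V4,
            map_add, map_sub, map_neg, map_mul, map_div₀, div_div_eq_mul_div, div_div, div_mul_eq_mul_div, ← mul_div_assoc]
          field_simp [hg2, hg3, hN1, hN1', hN2, hN2', ht1, ht2, ht3, ht4]
          ring
        rcases eq_or_ne k (i+2) with rfl | h4
        · simp only [UF1, UF2, UF3, UF4, VF1, VF2, VF3, VF4, U1, U2, U3, U4, V1, V2, V3, V4,
            map_add, map_sub, map_neg, map_mul, map_div₀, div_div_eq_mul_div, div_div, div_mul_eq_mul_div, ← mul_div_assoc]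
          field_simp [hg2, hg3, hN1, hN1', hN2, hN2', ht1, ht2, ht3, ht4]
          ring
        · have e1 : s i (f k) = f k := hf4 i k h2 h3 h1
          have e2 : s (i+1) (f k) = f k := hf4 (i+1) k h3 (by omega) (by omega)
          simp only [e1, e2]
    · -- τ k
      show s i (s (i+1) (s i (τ k))) = s (i+1) (s i (s (i+1) (τ k)))
      rcases eq_or_ne k i with rfl | h1
      · have E : s (k+1) (s k (τ k)) = (f k * f (k+1) - α (k+1)) * τ (k-1) * τ (k+2) / τ (k+1) := by
          rw [UT2, map_div₀, map_mul, map_mul, VF2, VT1, VT3, VT2]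
          field_simp
        rw [VT2, E, map_div₀, map_mul, map_mul, map_sub, map_mul, UF2, UF3, U3, UT1, UT4, UT3]
        field_simp
        first | ring1 | (left; left; ring1) | simp
      rcases eq_or_ne k (i+1) with rfl | h2
      · have E2 : s i (s (i+1) (τ (i+1))) = (f (i+1) * f i + α i) * τ (i-1) * τ (i+2) / τ i := by
          rw [VT3, map_div₀, map_mul, map_mul, UF3, UT2, UT4, UT3]
          field_simp
        rw [UT3, E2, map_div₀, map_mul, map_mul, map_add, map_mul, VF3, VF2, V2, VT1, VT4, VT2]
        field_simp
        first | ring1 | (left; left; ring1) | simp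
      · have e1 : s i (τ k) = τ k := hτ2 i k h1
        have e2 : s (i+1) (τ k) = τ k := hτ2 (i+1) k h2
        simp only [e1, e2]
  constructor
  · intro i
    have hu := hsq i
    have hv := hsq (i+1)
    have k := key i
    calc (s i * s (i+1))^3 = (s i * s (i+1) * s i) * (s (i+1) * s i * s (i+1)) := by
          simp only [pow_succ, pow_zero, one_mul, mul_assoc]
    _ = (s (i+1) * s i * s (i+1)) * (s (i+1) * s i * s (i+1)) := by rw [k]
    _ = s (i+1) * (s i * ((s (i+1) * s (i+1)) * (s i * s (i+1)))) := by simp only [mul_assoc]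
    _ = 1 := by
        rw [hv, one_mul, show s i * (s i * s (i+1)) = (s i * s i) * s (i+1) from
          (mul_assoc _ _ _).symm, hu, one_mul, hv]
  · -- commutation
    have aux : ∀ i j : ℤ, i + 2 ≤ j → s i * s j = s j * s i := by
      intro i j hij
      apply aut_ext' hgen
      rintro x (hx | ⟨k, rfl⟩)
      · rcases hx with ⟨k, rfl⟩ | ⟨k, rfl⟩
        · -- α k
          show s i (s j (α k)) = s j (s i (α k))
          rcases eq_or_ne k (i-1) with rfl | h1
          · have e1 : s i (α (i-1)) = α (i-1) + α i := hα3 i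
            have e2 : s j (α (i-1)) = α (i-1) := hα4 j (i-1) (by omega) (by omega) (by omega)
            have e3 : s j (α i) = α i := hα4 j i (by omega) (by omega) (by omega)
            simp only [e1, e2, e3, map_add]
          rcases eq_or_ne k i with rfl | h2
          · have e1 : s k (α k) = -α k := hα1 k
            have e2 : s j (α k) = α k := hα4 j k (by omega) (by omega) (by omega)
            simp only [e1, e2, map_neg]
          rcases eq_or_ne k (i+1) with rfl | h3
          · have e1 : s i (α (i+1)) = α (i+1) + α i := hα2 i
            have e3 : s j (α i) = α i := hα4 j i (by omega) (by omega) (by omega)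
            rcases eq_or_ne j (i+2) with rfl | hj
            · have e2 : s (i+2) (α (i+1)) = α (i+1) + α (i+2) := hα3' (i+2) (i+1) (by omega)
              have e4 : s i (α (i+2)) = α (i+2) := hα4 i (i+2) (by omega) (by omega) (by omega)
              simp only [e1, e2, e3, e4, map_add]
              ring
            · have e2 : s j (α (i+1)) = α (i+1) := hα4 j (i+1) (by omega) (by omega) (by omega)
              simp only [e1, e2, e3, map_add]
          rcases eq_or_ne k (j-1) with rfl | h4
          · have e1 : s j (α (j-1)) = α (j-1) + α j := hα3 j
            have e2 : s i (α (j-1)) = α (j-1) := hα4 i (j-1) (by omega) (by omega) (by omega)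
            have e3 : s i (α j) = α j := hα4 i j (by omega) (by omega) (by omega)
            simp only [e1, e2, e3, map_add]
          rcases eq_or_ne k j with rfl | h5
          · have e1 : s k (α k) = -α k := hα1 k
            have e2 : s i (α k) = α k := hα4 i k (by omega) (by omega) (by omega)
            simp only [e1, e2, map_neg]
          rcases eq_or_ne k (j+1) with rfl | h6
          · have e1 : s j (α (j+1)) = α (j+1) + α j := hα2 j
            have e2 : s i (α (j+1)) = α (j+1) := hα4 i (j+1) (by omega) (by omega) (by omega)
            have e3 : s i (α j) = α j := hα4 i j (by omega) (by omega) (by omega)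
            simp only [e1, e2, e3, map_add]
          · have e1 : s i (α k) = α k := hα4 i k h2 h3 h1
            have e2 : s j (α k) = α k := hα4 j k h5 h6 h4
            simp only [e1, e2]
        · -- f k
          show s i (s j (f k)) = s j (s i (f k))
          rcases eq_or_ne k (i-1) with rfl | h1
          · have e1 : s i (f (i-1)) = f (i-1) - α i / f i := hf3 i
            have e2 : s j (f (i-1)) = f (i-1) := hf4 j (i-1) (by omega) (by omega) (by omega)
            have e3 : s j (α i) = α i := hα4 j i (by omega) (by omega) (by omega)
            have e4 : s j (f i) = f i := hf4 j i (by omega) (by omega) (by omega)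
            simp only [e1, e2, e3, e4, map_sub, map_div₀]
          rcases eq_or_ne k i with rfl | h2
          · have e1 : s k (f k) = f k := hf1 k
            have e2 : s j (f k) = f k := hf4 j k (by omega) (by omega) (by omega)
            simp only [e1, e2]
          rcases eq_or_ne k (i+1) with rfl | h3
          · have e1 : s i (f (i+1)) = f (i+1) + α i / f i := hf2 i
            have e3 : s j (α i) = α i := hα4 j i (by omega) (by omega) (by omega)
            have e4 : s j (f i) = f i := hf4 j i (by omega) (by omega) (by omega)
            rcases eq_or_ne j (i+2) with rfl | hj
            · have e2 : s (i+2) (f (i+1)) = f (i+1) - α (i+2) / f (i+2) := hf3' (i+2) (i+1) (by omega)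
              have e5 : s i (α (i+2)) = α (i+2) := hα4 i (i+2) (by omega) (by omega) (by omega)
              have e6 : s i (f (i+2)) = f (i+2) := hf4 i (i+2) (by omega) (by omega) (by omega)
              simp only [e1, e2, e3, e4, e5, e6, map_add, map_sub, map_div₀]
              ring
            · have e2 : s j (f (i+1)) = f (i+1) := hf4 j (i+1) (by omega) (by omega) (by omega)
              simp only [e1, e2, e3, e4, map_add, map_div₀]
          rcases eq_or_ne k (j-1) with rfl | h4
          · have e1 : s j (f (j-1)) = f (j-1) - α j / f j := hf3 j
            have e2 : s i (f (j-1)) = f (j-1) := hf4 i (j-1) (by omega) (by omega) (by omega)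
            have e3 : s i (α j) = α j := hα4 i j (by omega) (by omega) (by omega)
            have e4 : s i (f j) = f j := hf4 i j (by omega) (by omega) (by omega)
            simp only [e1, e2, e3, e4, map_sub, map_div₀]
          rcases eq_or_ne k j with rfl | h5
          · have e1 : s k (f k) = f k := hf1 k
            have e2 : s i (f k) = f k := hf4 i k (by omega) (by omega) (by omega)
            simp only [e1, e2]
          rcases eq_or_ne k (j+1) with rfl | h6
          · have e1 : s j (f (j+1)) = f (j+1) + α j / f j := hf2 j
            have e2 : s i (f (j+1)) = f (j+1) := hf4 i (j+1) (by omega) (by omega) (by omega)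
            have e3 : s i (α j) = α j := hα4 i j (by omega) (by omega) (by omega)
            have e4 : s i (f j) = f j := hf4 i j (by omega) (by omega) (by omega)
            simp only [e1, e2, e3, e4, map_add, map_div₀]
          · have e1 : s i (f k) = f k := hf4 i k h2 h3 h1
            have e2 : s j (f k) = f k := hf4 j k h5 h6 h4
            simp only [e1, e2]
      · -- τ k
        show s i (s j (τ k)) = s j (s i (τ k))
        rcases eq_or_ne k i with rfl | h1
        · have e1 : s k (τ k) = f k * τ (k-1) * τ (k+1) / τ k := hτ1 k
          have e2 : s j (τ k) = τ k := hτ2 j k (by omega)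
          have e3 : s j (f k) = f k := hf4 j k (by omega) (by omega) (by omega)
          have e4 : s j (τ (k-1)) = τ (k-1) := hτ2 j (k-1) (by omega)
          have e5 : s j (τ (k+1)) = τ (k+1) := hτ2 j (k+1) (by omega)
          simp only [e1, e2, e3, e4, e5, map_mul, map_div₀]
        rcases eq_or_ne k j with rfl | h2
        · have e1 : s k (τ k) = f k * τ (k-1) * τ (k+1) / τ k := hτ1 k
          have e2 : s i (τ k) = τ k := hτ2 i k (by omega)
          have e3 : s i (f k) = f k := hf4 i k (by omega) (by omega) (by omega)
          have e4 : s i (τ (k-1)) = τ (k-1) := hτ2 i (k-1) (by omega)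
          have e5 : s i (τ (k+1)) = τ (k+1) := hτ2 i (k+1) (by omega)
          simp only [e1, e2, e3, e4, e5, map_mul, map_div₀]
        · have e1 : s i (τ k) = τ k := hτ2 i k h1
          have e2 : s j (τ k) = τ k := hτ2 j k h2
          simp only [e1, e2]
    intro i j hij
    have : i + 2 ≤ j ∨ j + 2 ≤ i := by
      rcases abs_cases (i - j) with ⟨h, _⟩ | ⟨h, _⟩ <;> omega
    rcases this with h | h
    · exact aux i j h
    · exact (aux j i h).symm
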